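/- Block realization of a transfer function with a linear polynomial part: let E_p, A_p ∈ ℝ^{r×r}, B_p ∈ ℝ^{r×m}, C_p ∈ ℝ^{m×r}, M₀, M₁ ∈ ℝ^{m×m}. Define the block matrices Ẽ = diag(E_p, M₁, 0_{m×m}), Ã = [[A_p, 0, 0],[0, 0, −I_m],[0, I_m, 0]], B̃ = [B_p; 0; I_m], C̃ = [C_p, 0, I_m], D̃ = M₀ (sizes (r+2m)×(r+2m), (r+2m)×m, m×(r+2m), m×m). Then for every s ∈ ℂ such that sE_p − A_p is invertible, the matrix sẼ − Ã is invertible and C̃(sẼ − Ã)^{-1}B̃ + D̃ = C_p(sE_p − A_p)^{-1}B_p + M₀ + s·M₁. -/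

import Mathlib

open Matrix
open scoped ComplexOrder

/-- View a real matrix as a complex matrix. -/
noncomputable def toC {k l : Type*} (M : Matrix k l ℝ) : Matrix k l ℂ :=
  M.map (fun x => (x : ℂ))

/-- The matrix pencil `s E - A`, viewed over `ℂ`. -/
noncomputable def pencil {n : ℕ} (E A : Matrix (Fin n) (Fin n) ℝ) (s : ℂ) :
    Matrix (Fin n) (Fin n) ℂ :=
  s • toC E - toC A

/-- The transfer function `T(s) = C (sE - A)⁻¹ B + D` of the descriptor system. -/
noncomputable def transfer {n m : ℕ} (E A : Matrix (Fin n) (Fin n) ℝ)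
    (B : Matrix (Fin n) (Fin m) ℝ) (C : Matrix (Fin m) (Fin n) ℝ)
    (D : Matrix (Fin m) (Fin m) ℝ) (s : ℂ) : Matrix (Fin m) (Fin m) ℂ :=
  toC C * (pencil E A s)⁻¹ * toC B + toC D

/-- A descriptor system is positive real if the pencil is invertible on the open right
half-plane and `T(s) + T(s)ᴴ` is positive semidefinite there. -/
def PositiveReal {n m : ℕ} (E A : Matrix (Fin n) (Fin n) ℝ)
    (B : Matrix (Fin n) (Fin m) ℝ) (C : Matrix (Fin m) (Fin n) ℝ)
    (D : Matrix (Fin m) (Fin m) ℝ) : Prop :=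
  ∀ s : ℂ, 0 < s.re → (pencil E A s).det ≠ 0 ∧
    (transfer E A B C D s + (transfer E A B C D s)ᴴ).PosSemidef

/-- Complete controllability: `[αE - βA, B]` has full row rank for all `(α,β) ≠ (0,0)`. -/
def CompletelyControllable {n m : ℕ} (E A : Matrix (Fin n) (Fin n) ℝ)
    (B : Matrix (Fin n) (Fin m) ℝ) : Prop :=
  ∀ α β : ℂ, ¬(α = 0 ∧ β = 0) →
    (fromCols (α • toC E - β • toC A) (toC B)).rank = n

/-- Complete observability: `[αE - βA; C]` has full column rank for all `(α,β) ≠ (0,0)`. -/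
def CompletelyObservable {n m : ℕ} (E A : Matrix (Fin n) (Fin n) ℝ)
    (C : Matrix (Fin m) (Fin n) ℝ) : Prop :=
  ∀ α β : ℂ, ¬(α = 0 ∧ β = 0) →
    (fromRows (α • toC E - β • toC A) (toC C)).rank = n

/-- A descriptor system `(E,A,B,C,D)` is port-Hamiltonian if it admits a pH decomposition. -/
def IsPortHamiltonian {n m : ℕ} (E A : Matrix (Fin n) (Fin n) ℝ)
    (B : Matrix (Fin n) (Fin m) ℝ) (C : Matrix (Fin m) (Fin n) ℝ)
    (D : Matrix (Fin m) (Fin m) ℝ) : Prop :=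
  ∃ (J R Q : Matrix (Fin n) (Fin n) ℝ) (G P : Matrix (Fin n) (Fin m) ℝ),
    A = (J - R) * Q ∧ B = G - P ∧ C = (G + P)ᵀ * Q ∧ Jᵀ = -J ∧
    (Eᵀ * Q).PosSemidef ∧
    (fromBlocks (Qᵀ * R * Q) (Qᵀ * P) (Pᵀ * Q) ((1/2 : ℝ) • (D + Dᵀ))).PosSemidef

/-- The KYP block matrix `[[AᵀQ + QᵀA, QᵀB - Cᵀ], [BᵀQ - C, -D - Dᵀ]]`. -/
def KYPmatrix {n m : ℕ} (A : Matrix (Fin n) (Fin n) ℝ)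
    (B : Matrix (Fin n) (Fin m) ℝ) (C : Matrix (Fin m) (Fin n) ℝ)
    (D : Matrix (Fin m) (Fin m) ℝ) (Q : Matrix (Fin n) (Fin n) ℝ) :
    Matrix (Fin n ⊕ Fin m) (Fin n ⊕ Fin m) ℝ :=
  fromBlocks (Aᵀ * Q + Qᵀ * A) (Qᵀ * B - Cᵀ) (Bᵀ * Q - C) (-D - Dᵀ)

section Aux
variable {k l k' l' : Type*}

lemma toC_fromBlocks (A : Matrix k l ℝ) (B : Matrix k l' ℝ) (C : Matrix k' l ℝ)
    (D : Matrix k' l' ℝ) :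
    toC (fromBlocks A B C D) = fromBlocks (toC A) (toC B) (toC C) (toC D) := by
  simp [toC, fromBlocks_map]

lemma toC_fromRows (A : Matrix k l ℝ) (B : Matrix k' l ℝ) :
    toC (fromRows A B) = fromRows (toC A) (toC B) := by
  ext (i | i) j <;> simp [toC]

lemma toC_fromColumns (A : Matrix k l ℝ) (B : Matrix k l' ℝ) :
    toC (fromCols A B) = fromCols (toC A) (toC B) := by
  ext i (j | j) <;> simp [toC]

lemma toC_zero : toC (0 : Matrix k l ℝ) = 0 := by ext i j; simp [toC]

lemma toC_one [DecidableEq k] : toC (1 : Matrix k k ℝ) = 1 := by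
  ext i j; by_cases h : i = j <;> simp [toC, Matrix.one_apply, h]

lemma toC_neg (A : Matrix k l ℝ) : toC (-A) = -toC A := by ext i j; simp [toC]

end Aux

/-- Block realization of a transfer function with a linear polynomial
part: `C̃(sẼ - Ã)⁻¹B̃ + M₀ = C_p(sE_p - A_p)⁻¹B_p + M₀ + s·M₁`. -/
theorem block_realization_linear_part {r m : ℕ}
    (Ep Ap : Matrix (Fin r) (Fin r) ℝ) (Bp : Matrix (Fin r) (Fin m) ℝ)
    (Cp : Matrix (Fin m) (Fin r) ℝ) (M₀ M₁ : Matrix (Fin m) (Fin m) ℝ) :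
    ∀ s : ℂ, IsUnit (s • toC Ep - toC Ap) →
      IsUnit (s • toC (fromBlocks Ep 0 0
            (fromBlocks M₁ 0 0 (0 : Matrix (Fin m) (Fin m) ℝ)))
          - toC (fromBlocks Ap 0 0
            (fromBlocks 0 (-(1 : Matrix (Fin m) (Fin m) ℝ)) 1 0))) ∧
      toC (fromCols Cp (fromCols (0 : Matrix (Fin m) (Fin m) ℝ) (1 : Matrix (Fin m) (Fin m) ℝ))) *
          (s • toC (fromBlocks Ep 0 0
              (fromBlocks M₁ 0 0 (0 : Matrix (Fin m) (Fin m) ℝ)))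
            - toC (fromBlocks Ap 0 0
              (fromBlocks 0 (-(1 : Matrix (Fin m) (Fin m) ℝ)) 1 0)))⁻¹ *
          toC (fromRows Bp (fromRows 0 (1 : Matrix (Fin m) (Fin m) ℝ))) + toC M₀
        = toC Cp * (s • toC Ep - toC Ap)⁻¹ * toC Bp + toC M₀ + s • toC M₁ := by
  intro s hs
  set P : Matrix (Fin r) (Fin r) ℂ := s • toC Ep - toC Ap with hPdef
  set Q : Matrix (Fin m ⊕ Fin m) (Fin m ⊕ Fin m) ℂ :=
    fromBlocks (s • toC M₁) 1 (-1) 0 with hQdef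
  set R : Matrix (Fin m ⊕ Fin m) (Fin m ⊕ Fin m) ℂ :=
    fromBlocks 0 (-1) 1 (s • toC M₁) with hRdef
  have hQR : Q * R = 1 := by
    rw [hQdef, hRdef, fromBlocks_multiply]
    simp [← fromBlocks_one]
  have hRQ : R * Q = 1 := by
    rw [hQdef, hRdef, fromBlocks_multiply]
    simp [← fromBlocks_one]
  have hbig : s • toC (fromBlocks Ep 0 0
        (fromBlocks M₁ 0 0 (0 : Matrix (Fin m) (Fin m) ℝ)))
      - toC (fromBlocks Ap 0 0
        (fromBlocks 0 (-(1 : Matrix (Fin m) (Fin m) ℝ)) 1 0))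
      = fromBlocks P 0 0 Q := by
    simp only [toC_fromBlocks, toC_zero, toC_one, toC_neg, fromBlocks_smul]
    ext (i | i | i) (j | j | j) <;>
      simp [hPdef, hQdef, fromBlocks, Matrix.sub_apply]
  have hPdet : IsUnit P.det := (Matrix.isUnit_iff_isUnit_det _).mp hs
  have hPP : P * P⁻¹ = 1 := Matrix.mul_nonsing_inv _ hPdet
  have hPPl : P⁻¹ * P = 1 := Matrix.nonsing_inv_mul _ hPdet
  have hinv : (fromBlocks P 0 0 Q) * (fromBlocks P⁻¹ 0 0 R) = 1 := by
    rw [fromBlocks_multiply]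
    simp [hPP, hQR, ← fromBlocks_one]
  have hinv' : (fromBlocks P⁻¹ 0 0 R) * (fromBlocks P 0 0 Q) = 1 := by
    rw [fromBlocks_multiply]
    simp [hPPl, hRQ, ← fromBlocks_one]
  have hU : IsUnit (fromBlocks P 0 0 Q) :=
    ⟨⟨_, _, hinv, hinv'⟩, rfl⟩
  have hinveq : (fromBlocks P 0 0 Q)⁻¹ = fromBlocks P⁻¹ 0 0 R :=
    Matrix.inv_eq_right_inv hinv
  refine ⟨hbig ▸ hU, ?_⟩
  rw [hbig, hinveq]
  simp only [toC_fromColumns, toC_fromRows, toC_zero, toC_one]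
  rw [hRdef]
  simp [fromCols_mul_fromBlocks, fromCols_mul_fromRows, Matrix.mul_assoc, add_assoc, add_comm (s • toC M₁)]
  erw [fromCols_mul_fromRows, fromCols_mul_fromRows]
  simp [Matrix.mul_assoc, add_assoc, add_comm (s • toC M₁)]
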